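/- The prechart SExp of 1-free star expressions is locally finite: for every expression e, the smallest subcoalgebra ⟨e⟩ containing e is finite. Moreover, the number of states of ⟨e⟩ is at most N(e), where N(0) = N(a) = 1, N(e₁+e₂) = N(e₁*e₂) = N(e₁)+N(e₂), and N(e₁e₂) = N(e₁) + N(e₁)·N(e₂). -/

import Mathlib

/-- 1-free star expressions over alphabet `A`. -/
inductive SExp (A : Type) : Type
  | act : A → SExp A
  | zero : SExp A
  | add : SExp A → SExp A → SExp A
  | seq : SExp A → SExp A → SExp A
  | star : SExp A → SExp A → SExp A

/-- The output relation `e ⇒ a` of the operational semantics. -/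
inductive SOut {A : Type} : SExp A → A → Prop
  | act (a : A) : SOut (.act a) a
  | addL {e₁ e₂ : SExp A} {a : A} : SOut e₁ a → SOut (.add e₁ e₂) a
  | addR {e₁ e₂ : SExp A} {a : A} : SOut e₂ a → SOut (.add e₁ e₂) a
  | star {e₁ e₂ : SExp A} {a : A} : SOut e₂ a → SOut (.star e₁ e₂) a

/-- The transition relation `e →a f` of the operational semantics. -/
inductive STr {A : Type} : SExp A → A → SExp A → Prop
  | addL {e₁ e₂ f : SExp A} {a : A} : STr e₁ a f → STr (.add e₁ e₂) a f
  | addR {e₁ e₂ f : SExp A} {a : A} : STr e₂ a f → STr (.add e₁ e₂) a f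
  | seqO {e₁ e₂ : SExp A} {a : A} : SOut e₁ a → STr (.seq e₁ e₂) a e₂
  | seqT {e₁ e₂ f : SExp A} {a : A} : STr e₁ a f → STr (.seq e₁ e₂) a (.seq f e₂)
  | starR {e₁ e₂ f : SExp A} {a : A} : STr e₂ a f → STr (.star e₁ e₂) a f
  | starL {e₁ e₂ f : SExp A} {a : A} : STr e₁ a f → STr (.star e₁ e₂) a (.seq f (.star e₁ e₂))
  | starO {e₁ e₂ : SExp A} {a : A} : SOut e₁ a → STr (.star e₁ e₂) a (.star e₁ e₂)

/-- Provable equivalence: the smallest congruence containing Milner's 1-free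
axioms (B1)-(B7), (BKS1), (BKS2) and closed under the rule (RSP). -/
inductive Eqv {A : Type} : SExp A → SExp A → Prop
  | refl (e : SExp A) : Eqv e e
  | symm {e f : SExp A} : Eqv e f → Eqv f e
  | trans {e f g : SExp A} : Eqv e f → Eqv f g → Eqv e g
  | addCongr {e₁ f₁ e₂ f₂ : SExp A} : Eqv e₁ f₁ → Eqv e₂ f₂ → Eqv (.add e₁ e₂) (.add f₁ f₂)
  | seqCongr {e₁ f₁ e₂ f₂ : SExp A} : Eqv e₁ f₁ → Eqv e₂ f₂ → Eqv (.seq e₁ e₂) (.seq f₁ f₂)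
  | starCongr {e₁ f₁ e₂ f₂ : SExp A} : Eqv e₁ f₁ → Eqv e₂ f₂ → Eqv (.star e₁ e₂) (.star f₁ f₂)
  | B1 (e₁ e₂ : SExp A) : Eqv (.add e₁ e₂) (.add e₂ e₁)
  | B2 (e₁ e₂ e₃ : SExp A) : Eqv (.add e₁ (.add e₂ e₃)) (.add (.add e₁ e₂) e₃)
  | B3 (e₁ : SExp A) : Eqv (.add e₁ e₁) e₁
  | B4 (e₁ e₂ e₃ : SExp A) : Eqv (.seq (.add e₁ e₂) e₃) (.add (.seq e₁ e₃) (.seq e₂ e₃))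
  | B5 (e₁ e₂ e₃ : SExp A) : Eqv (.seq e₁ (.seq e₂ e₃)) (.seq (.seq e₁ e₂) e₃)
  | B6 (e₁ : SExp A) : Eqv (.add e₁ .zero) e₁
  | B7 (e₁ : SExp A) : Eqv (.seq .zero e₁) .zero
  | BKS1 (e₁ e₂ : SExp A) : Eqv (.star e₁ e₂) (.add (.seq e₁ (.star e₁ e₂)) e₂)
  | BKS2 (e₁ e₂ e₃ : SExp A) : Eqv (.seq (.star e₁ e₂) e₃) (.star e₁ (.seq e₂ e₃))
  | RSP {e₁ e₂ e₃ : SExp A} : Eqv e₃ (.add (.seq e₁ e₃) e₂) → Eqv e₃ (.star e₁ e₂)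

/-- Generalized sum of a list of expressions (the empty sum is `0`). -/
def sumList {A : Type} (l : List (SExp A)) : SExp A := l.foldr SExp.add SExp.zero

/-- Size bound `N(e)` on the chart interpretation of `e`. -/
def Nsize {A : Type} : SExp A → ℕ
  | .act _ => 1
  | .zero => 1
  | .add e₁ e₂ => Nsize e₁ + Nsize e₂
  | .seq e₁ e₂ => Nsize e₁ + Nsize e₁ * Nsize e₂
  | .star e₁ e₂ => Nsize e₁ + Nsize e₂

/-- `⟨e⟩`: the smallest set containing `e` and closed under transitions. -/
def Reach {A : Type} (e : SExp A) : Set (SExp A) :=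
  {f | Relation.ReflTransGen (fun u v => ∃ a, STr u a v) e f}

/-- List of proper derivatives: contains all one-step successors of `e`
and is closed under transitions. -/
def Pder {A : Type} : SExp A → List (SExp A)
  | .act _ => []
  | .zero => []
  | .add e₁ e₂ => Pder e₁ ++ Pder e₂
  | .seq e₁ e₂ => (Pder e₁).map (fun g => .seq g e₂) ++ e₂ :: Pder e₂
  | .star e₁ e₂ =>
      (Pder e₁).map (fun g => .seq g (.star e₁ e₂)) ++ (.star e₁ e₂) :: Pder e₂

theorem Nsize_pos {A : Type} (e : SExp A) : 1 ≤ Nsize e := by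
  induction e with
  | act a => simp [Nsize]
  | zero => simp [Nsize]
  | add e₁ e₂ ih₁ ih₂ => simp [Nsize]; omega
  | seq e₁ e₂ ih₁ ih₂ => simp [Nsize]; omega
  | star e₁ e₂ ih₁ ih₂ => simp [Nsize]; omega

theorem Pder_length {A : Type} (e : SExp A) : (Pder e).length + 1 ≤ Nsize e := by
  induction e with
  | act a => simp [Pder, Nsize]
  | zero => simp [Pder, Nsize]
  | add e₁ e₂ ih₁ ih₂ => simp [Pder, Nsize]; omega
  | seq e₁ e₂ ih₁ ih₂ =>
      have h₁ := Nsize_pos e₁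
      have h₂ := Nsize_pos e₂
      have : Nsize e₂ ≤ Nsize e₁ * Nsize e₂ := Nat.le_mul_of_pos_left _ h₁
      simp [Pder, Nsize]; omega
  | star e₁ e₂ ih₁ ih₂ => simp [Pder, Nsize]; omega

/-- Every one-step successor of `e` is in `Pder e`. -/
theorem mem_Pder_of_STr {A : Type} {e : SExp A} {a : A} {g : SExp A}
    (h : STr e a g) : g ∈ Pder e := by
  induction h with
  | addL _ ih => exact List.mem_append_left _ ih
  | addR _ ih => exact List.mem_append_right _ ih
  | seqO _ => exact List.mem_append_right _ (List.mem_cons_self)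
  | seqT _ ih => exact List.mem_append_left _ (List.mem_map_of_mem ih)
  | starR _ ih =>
      exact List.mem_append_right _ (List.mem_cons_of_mem _ ih)
  | starL _ ih => exact List.mem_append_left _ (List.mem_map_of_mem ih)
  | starO _ => exact List.mem_append_right _ (List.mem_cons_self)

/-- `Pder e` is closed under transitions. -/
theorem Pder_closed {A : Type} (e : SExp A) :
    ∀ f ∈ Pder e, ∀ {a : A} {g : SExp A}, STr f a g → g ∈ Pder e := by
  induction e with
  | act a => intro f hf; simp [Pder] at hf
  | zero => intro f hf; simp [Pder] at hf
  | add e₁ e₂ ih₁ ih₂ =>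
      intro f hf a g hg
      rcases List.mem_append.mp hf with h | h
      · exact List.mem_append_left _ (ih₁ f h hg)
      · exact List.mem_append_right _ (ih₂ f h hg)
  | seq e₁ e₂ ih₁ ih₂ =>
      intro f hf a g hg
      rcases List.mem_append.mp hf with h | h
      · obtain ⟨u, hu, rfl⟩ := List.mem_map.mp h
        cases hg with
        | seqO _ => exact List.mem_append_right _ (List.mem_cons_self)
        | seqT ht =>
            exact List.mem_append_left _ (List.mem_map_of_mem (ih₁ u hu ht))
      · rcases List.mem_cons.mp h with rfl | h
        · exact List.mem_append_right _
            (List.mem_cons_of_mem _ (mem_Pder_of_STr hg))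
        · exact List.mem_append_right _ (List.mem_cons_of_mem _ (ih₂ f h hg))
  | star e₁ e₂ ih₁ ih₂ =>
      intro f hf a g hg
      rcases List.mem_append.mp hf with h | h
      · obtain ⟨u, hu, rfl⟩ := List.mem_map.mp h
        cases hg with
        | seqO _ => exact List.mem_append_right _ (List.mem_cons_self)
        | seqT ht =>
            exact List.mem_append_left _ (List.mem_map_of_mem (ih₁ u hu ht))
      · rcases List.mem_cons.mp h with rfl | h
        · cases hg with
          | starR ht =>
              exact List.mem_append_right _
                (List.mem_cons_of_mem _ (mem_Pder_of_STr ht))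
          | starL ht =>
              exact List.mem_append_left _
                (List.mem_map_of_mem (mem_Pder_of_STr ht))
          | starO _ => exact List.mem_append_right _ (List.mem_cons_self)
        · exact List.mem_append_right _ (List.mem_cons_of_mem _ (ih₂ f h hg))

theorem Reach_subset {A : Type} (e : SExp A) :
    Reach e ⊆ {x | x ∈ (e :: Pder e)} := by
  intro f hf
  induction hf with
  | refl => exact List.mem_cons_self
  | tail _ hstep ih =>
      obtain ⟨a, ha⟩ := hstep
      rcases List.mem_cons.mp ih with rfl | h
      · exact List.mem_cons_of_mem _ (mem_Pder_of_STr ha)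
      · exact List.mem_cons_of_mem _ (Pder_closed _ _ h ha)

/-- The prechart of 1-free star expressions is locally finite: the generated
subcoalgebra `⟨e⟩` is finite, with at most `N(e)` states. -/
theorem stmt8 {A : Type} (e : SExp A) :
    (Reach e).Finite ∧ (Reach e).ncard ≤ Nsize e := by
  classical
  have hsub := Reach_subset e
  have hfin : ({x | x ∈ (e :: Pder e)} : Set (SExp A)).Finite :=
    (e :: Pder e).finite_toSet
  refine ⟨hfin.subset hsub, ?_⟩
  calc (Reach e).ncard ≤ ({x | x ∈ (e :: Pder e)} : Set (SExp A)).ncard :=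
        Set.ncard_le_ncard hsub hfin
    _ = (e :: Pder e).toFinset.card := by
        rw [← Set.ncard_coe_finset]; congr 1; ext x; simp
    _ ≤ (e :: Pder e).length := (e :: Pder e).toFinset_card_le
    _ ≤ Nsize e := by simpa using Pder_length e
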